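/- Let r ≥ 1 and let M_1,…,M_r, N_1,…,N_r ∈ ℂ^{n×n} (no invertibility assumed). Define the rn×rn pencils Q₁(λ) and Q₂(λ), with r×r block structure of n×n blocks, by: for Q₁, the (i,i) block is λ·M_{r+1−i} for i = 1,…,r, the (i+1,i) block is −N_{r+1−i} for i = 1,…,r−1, the (1,r) block is −N_1, all other blocks zero; for Q₂, the (i,i) block is λ·N_{r+1−i} for i = 1,…,r, the (i,i+1) block is −M_{r−i} for i = 1,…,r−1, the (r,1) block is −M_r, all other blocks zero. Then there exists ε ∈ {1,−1} such that det Q₂(λ) = ε·λ^{rn}·det Q₁(1/λ) for all nonzero λ ∈ ℂ; in particular, for every nonzero λ₀ ∈ ℂ, det Q₂(λ₀) = 0 if and only if det Q₁(1/λ₀) = 0. -/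

import Mathlib

open Matrix

/-- The `rn × rn` block pencil `Q₁(λ)`: block `(i,i)` is `λ·M_{r+1-i}`, block `(i+1,i)` is
`-N_{r+1-i}` for `i = 1,…,r-1`, block `(1,r)` is `-N_1`, all other blocks zero. -/
def pencilQ1 (r n : ℕ) (M N : Fin r → Matrix (Fin n) (Fin n) ℂ) (μ : ℂ) :
    Matrix (Fin r × Fin n) (Fin r × Fin n) ℂ :=
  Matrix.of fun p q =>
    (if p.1 = q.1 then μ * M p.1.rev p.2 q.2 else 0) +
    (if (p.1 : ℕ) = (q.1 : ℕ) + 1 ∨ ((p.1 : ℕ) = 0 ∧ (q.1 : ℕ) = r - 1) then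
      -(N q.1.rev p.2 q.2) else 0)

/-- The `rn × rn` block pencil `Q₂(λ)`: block `(i,i)` is `λ·N_{r+1-i}`, block `(i,i+1)` is
`-M_{r-i}` for `i = 1,…,r-1`, block `(r,1)` is `-M_r`, all other blocks zero. -/
def pencilQ2 (r n : ℕ) (M N : Fin r → Matrix (Fin n) (Fin n) ℂ) (μ : ℂ) :
    Matrix (Fin r × Fin n) (Fin r × Fin n) ℂ :=
  Matrix.of fun p q =>
    (if p.1 = q.1 then μ * N p.1.rev p.2 q.2 else 0) +
    (if (q.1 : ℕ) = (p.1 : ℕ) + 1 ∨ ((p.1 : ℕ) = r - 1 ∧ (q.1 : ℕ) = 0) then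
      -(M q.1.rev p.2 q.2) else 0)

/-- There is a sign `ε ∈ {1,-1}` with `det Q₂(λ) = ε·λ^{rn}·det Q₁(1/λ)` for all `λ ≠ 0`;
in particular, for nonzero `λ₀`, `det Q₂(λ₀) = 0` iff `det Q₁(1/λ₀) = 0`. -/
theorem pencilQ2_det_eq_rev_pencilQ1 (r n : ℕ) (hr : 1 ≤ r)
    (M N : Fin r → Matrix (Fin n) (Fin n) ℂ) :
    (∃ ε : ℂ, (ε = 1 ∨ ε = -1) ∧
      ∀ μ : ℂ, μ ≠ 0 →
        (pencilQ2 r n M N μ).det = ε * μ ^ (r * n) * (pencilQ1 r n M N μ⁻¹).det) ∧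
    (∀ μ : ℂ, μ ≠ 0 →
      ((pencilQ2 r n M N μ).det = 0 ↔ (pencilQ1 r n M N μ⁻¹).det = 0)) := by

  obtain ⟨r', rfl⟩ := Nat.exists_eq_succ_of_ne_zero (by omega : r ≠ 0)
  set σ : Equiv.Perm (Fin (r' + 1) × Fin n) :=
    (finRotate (r' + 1)).prodCongr (Equiv.refl (Fin n)) with hσ
  set ε : ℂ := (-1) ^ ((r' + 1) * n) * ((Equiv.Perm.sign σ : ℤ) : ℂ) with hε
  have hεsign : ε = 1 ∨ ε = -1 := by
    rcases Int.units_eq_one_or (Equiv.Perm.sign σ) with h | h <;>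
      rcases Nat.even_or_odd ((r' + 1) * n) with he | he <;>
      simp [hε, h, he.neg_one_pow]
  have hεne : ε ≠ 0 := by rcases hεsign with h | h <;> simp [h]
  have key : ∀ μ : ℂ, μ ≠ 0 →
      pencilQ2 (r' + 1) n M N μ
        = (-μ) • ((pencilQ1 (r' + 1) n M N μ⁻¹).submatrix σ id) := by
    intro μ hμ
    ext ⟨p1, p2⟩ ⟨q1, q2⟩
    have hp1 : (p1 : ℕ) < r' + 1 := p1.isLt
    have hq1 : (q1 : ℕ) < r' + 1 := q1.isLt
    have hval : ((finRotate (r' + 1) p1 : Fin (r' + 1)) : ℕ)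
        = if (p1 : ℕ) = r' then 0 else (p1 : ℕ) + 1 := by
      rw [finRotate_succ_apply, Fin.val_add_one]
      by_cases h : p1 = Fin.last r'
      · simp [h, Fin.val_last]
      · rw [if_neg h, if_neg (by simpa [Fin.ext_iff, Fin.val_last] using h)]
    have hval2 : (((p1 : ℕ) = r' ∧ ((finRotate (r' + 1) p1 : Fin (r' + 1)) : ℕ) = 0) ∨
        ((p1 : ℕ) ≠ r' ∧ ((finRotate (r' + 1) p1 : Fin (r' + 1)) : ℕ) = (p1 : ℕ) + 1)) := by
      by_cases h : (p1 : ℕ) = r'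
      · exact Or.inl ⟨h, by rw [hval, if_pos h]⟩
      · exact Or.inr ⟨h, by rw [hval, if_neg h]⟩
    have hfineq : (finRotate (r' + 1) p1 = q1) ↔
        ((q1 : ℕ) = (p1 : ℕ) + 1 ∨ ((p1 : ℕ) = r' + 1 - 1 ∧ (q1 : ℕ) = 0)) := by
      rw [Fin.ext_iff]
      rcases hval2 with ⟨h1, h2⟩ | ⟨h1, h2⟩ <;> rw [h2] <;> omega
    have hfineq2 : (((finRotate (r' + 1) p1 : Fin (r' + 1)) : ℕ) = (q1 : ℕ) + 1 ∨
        (((finRotate (r' + 1) p1 : Fin (r' + 1)) : ℕ) = 0 ∧ (q1 : ℕ) = r' + 1 - 1)) ↔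
        p1 = q1 := by
      rw [Fin.ext_iff]
      rcases hval2 with ⟨h1, h2⟩ | ⟨h1, h2⟩ <;> rw [h2] <;> omega
    simp only [pencilQ1, pencilQ2, Matrix.smul_apply, Matrix.submatrix_apply, Matrix.of_apply,
      smul_eq_mul, hσ, Equiv.prodCongr_apply, Equiv.refl_apply, Prod.map, id_eq]
    by_cases hd : p1 = q1
    · subst hd
      have h2 : (((finRotate (r' + 1) p1 : Fin (r' + 1)) : ℕ) = (p1 : ℕ) + 1 ∨
          (((finRotate (r' + 1) p1 : Fin (r' + 1)) : ℕ) = 0 ∧ (p1 : ℕ) = r' + 1 - 1)) := by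
        rw [hfineq2]
      rw [if_pos rfl, if_pos h2]
      by_cases hod : ((p1 : ℕ) = (p1 : ℕ) + 1 ∨ ((p1 : ℕ) = r' + 1 - 1 ∧ (p1 : ℕ) = 0))
      · have h1 : finRotate (r' + 1) p1 = p1 := by
          rw [hfineq]; rcases hod with h | h <;> omega
        rw [if_pos hod, if_pos h1, h1]
        field_simp
        ring
      · rw [if_neg hod]
        have h1 : ¬ (finRotate (r' + 1) p1 = p1) := by
          rw [hfineq]; intro hx; apply hod; rcases hx with h | h <;> omega
        rw [if_neg h1]
        field_simp
        ring
    · have hd' : ¬ ((finRotate (r' + 1) p1 : Fin (r' + 1)) : ℕ) = (q1 : ℕ) + 1 ∧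
          ¬ (((finRotate (r' + 1) p1 : Fin (r' + 1)) : ℕ) = 0 ∧ (q1 : ℕ) = r' + 1 - 1) := by
        constructor
        · intro h; exact hd (hfineq2.mp (Or.inl h))
        · intro h; exact hd (hfineq2.mp (Or.inr h))
      rw [if_neg hd, if_neg (by tauto : ¬ (((finRotate (r' + 1) p1 : Fin (r' + 1)) : ℕ) = (q1 : ℕ) + 1 ∨ (((finRotate (r' + 1) p1 : Fin (r' + 1)) : ℕ) = 0 ∧ (q1 : ℕ) = r' + 1 - 1)))]
      by_cases hc : ((q1 : ℕ) = (p1 : ℕ) + 1 ∨ ((p1 : ℕ) = r' + 1 - 1 ∧ (q1 : ℕ) = 0))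
      · have h1 : finRotate (r' + 1) p1 = q1 := hfineq.mpr hc
        rw [if_pos hc, if_pos h1, h1]
        field_simp
        ring
      · have h1 : ¬ (finRotate (r' + 1) p1 = q1) := fun h => hc (hfineq.mp h)
        rw [if_neg hc, if_neg h1]
        ring
  have hdet : ∀ μ : ℂ, μ ≠ 0 →
      (pencilQ2 (r' + 1) n M N μ).det
        = ε * μ ^ ((r' + 1) * n) * (pencilQ1 (r' + 1) n M N μ⁻¹).det := by
    intro μ hμ
    rw [key μ hμ, Matrix.det_smul, Matrix.det_permute]
    have hcard : Fintype.card (Fin (r' + 1) × Fin n) = (r' + 1) * n := by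
      simp [Fintype.card_prod]
    rw [hcard, neg_pow, hε]
    ring
  refine ⟨⟨ε, hεsign, hdet⟩, ?_⟩
  intro μ hμ
  rw [hdet μ hμ]
  simp [hεne, hμ, pow_ne_zero, mul_eq_zero]
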